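/- Fix Δx > 0, x₀ ∈ ℝ and real values v₋₂, v₋₁, v₀, v₁, v₂. For k ∈ {0,1,2} let p_k be the unique polynomial of degree at most 2 with p_k(x₀ + mΔx) = v_m for m = k−2, k−1, k. Then Δx·∫_{x₀−Δx/2}^{x₀+Δx/2} p_k'(x)² dx + Δx³·∫_{x₀−Δx/2}^{x₀+Δx/2} p_k''(x)² dx equals: (13/12)(v₋₂ − 2v₋₁ + v₀)² + (1/4)(v₋₂ − 4v₋₁ + 3v₀)² for k = 0; (13/12)(v₋₁ − 2v₀ + v₁)² + (1/4)(v₁ − v₋₁)² for k = 1; and (13/12)(v₀ − 2v₁ + v₂)² + (1/4)(3v₀ − 4v₁ + v₂)² for k = 2. -/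

import Mathlib

open MeasureTheory

section JiangShuAux
open Polynomial

lemma quad_repr (p : Polynomial ℝ) (hp : p.degree ≤ 2) :
    p = C (p.coeff 0) + C (p.coeff 1) * X + C (p.coeff 2) * X ^ 2 := by
  ext n
  match n with
  | 0 => simp
  | 1 => simp [coeff_X_pow]
  | 2 => simp [coeff_X_pow]
  | (n+3) =>
    rw [Polynomial.coeff_eq_zero_of_degree_lt (lt_of_le_of_lt hp (by exact_mod_cast by omega))]
    simp [coeff_X_pow, Polynomial.coeff_C]

lemma deg_iff (p : Polynomial ℝ) : p.degree ≤ 2 ↔ p.degree < 3 := by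
  rcases eq_or_ne p 0 with rfl | h0
  · simp [Polynomial.degree_zero]
    exact bot_lt_iff_ne_bot.mpr (by simp)
  · rw [show (2 : WithBot ℕ) = ((2:ℕ):WithBot ℕ) from rfl, ← Polynomial.natDegree_le_iff_degree_le,
      show (3 : WithBot ℕ) = ((3:ℕ):WithBot ℕ) from rfl, ← Polynomial.natDegree_lt_iff_degree_lt h0]
    omega

lemma int_sq (A B l u : ℝ) : (∫ x in l..u, (B + 2*A*x)^2) =
    (B^2*u + 2*A*B*u^2 + 4*A^2*u^3/3) - (B^2*l + 2*A*B*l^2 + 4*A^2*l^3/3) := by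
  apply intervalIntegral.integral_eq_sub_of_hasDerivAt
  · intro x hx
    have h1 : HasDerivAt (fun x : ℝ => B^2*x + 2*A*B*x^2 + 4*A^2*x^3/3)
        (B^2*1 + 2*A*B*((2:ℕ)*x^1) + 4*A^2*((3:ℕ)*x^2)/3) x :=
      (((hasDerivAt_id x).const_mul (B^2)).add ((hasDerivAt_pow 2 x).const_mul (2*A*B))).add
        (((hasDerivAt_pow 3 x).const_mul (4*A^2)).div_const 3)
    refine h1.congr_deriv ?_
    push_cast; ring
  · exact ((continuous_const.add (continuous_const.mul continuous_id)).pow 2).intervalIntegrable l u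

lemma beta_val (Δx x₀ : ℝ) (p : Polynomial ℝ) (hp : p.degree ≤ 2) :
    Δx * (∫ x in (x₀ - Δx / 2)..(x₀ + Δx / 2), (p.derivative.eval x) ^ 2)
      + Δx ^ 3 * (∫ x in (x₀ - Δx / 2)..(x₀ + Δx / 2), (p.derivative.derivative.eval x) ^ 2)
    = Δx ^ 2 * (p.coeff 1 + 2 * p.coeff 2 * x₀) ^ 2 + (13 / 3) * (p.coeff 2) ^ 2 * Δx ^ 4 := by
  have hder : p.derivative = C (p.coeff 1) + C (2 * p.coeff 2) * X := by
    conv_lhs => rw [quad_repr p hp]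
    simp [Polynomial.derivative_add, Polynomial.derivative_C_mul]
    ring
    rw [Polynomial.C_ofNat]
  have hd2 : p.derivative.derivative = C (2 * p.coeff 2) := by
    rw [hder]; simp
  have h1 : (∫ x in (x₀ - Δx / 2)..(x₀ + Δx / 2), (p.derivative.eval x) ^ 2)
      = ∫ x in (x₀ - Δx / 2)..(x₀ + Δx / 2), (p.coeff 1 + 2 * (p.coeff 2) * x) ^ 2 := by
    congr 1; funext x; rw [hder]; simp
  rw [h1, int_sq (p.coeff 2) (p.coeff 1), hd2]
  simp [intervalIntegral.integral_const]
  ring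

lemma exun (Δx : ℝ) (hΔx : 0 < Δx) (x₀ : ℝ) (v : ℤ → ℝ) (k : ℤ) :
    ∃! p : Polynomial ℝ, p.degree ≤ 2 ∧
      ∀ m ∈ ({k - 2, k - 1, k} : Set ℤ), p.eval (x₀ + (m : ℝ) * Δx) = v m := by
  set s : Finset ℤ := {k - 2, k - 1, k} with hs
  have hinj : Set.InjOn (fun m : ℤ => x₀ + (m : ℝ) * Δx) ↑s := by
    intro a _ b _ hab
    simp only at hab
    have h2 : (a : ℝ) * Δx = b * Δx := by linarith
    have h3 : (a : ℝ) = b := mul_right_cancel₀ (ne_of_gt hΔx) h2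
    exact_mod_cast h3
  have hcard : s.card = 3 := by
    rw [hs]
    rw [Finset.card_insert_of_notMem (by simp), Finset.card_insert_of_notMem (by simp)]
    simp
  have hmem : ∀ m : ℤ, m ∈ ({k - 2, k - 1, k} : Set ℤ) ↔ m ∈ s := by
    intro m; simp [hs]
  refine ⟨Lagrange.interpolate s (fun m => x₀ + (m : ℝ) * Δx) v, ⟨?_, ?_⟩, ?_⟩
  · rw [deg_iff]
    have h := Lagrange.degree_interpolate_lt v hinj
    rw [hcard] at h
    exact_mod_cast h
  · intro m hm
    exact Lagrange.eval_interpolate_at_node v hinj ((hmem m).mp hm)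
  · rintro q ⟨hq1, hq2⟩
    refine Lagrange.eq_interpolate_of_eval_eq _ hinj ?_ (fun m hm => hq2 m ((hmem m).mpr hm))
    rw [hcard]
    exact_mod_cast (deg_iff q).mp hq1


end JiangShuAux

/-- Closed-form evaluation of the Jiang–Shu smoothness indicator
`β_k = Δx ∫ (p_k')² + Δx³ ∫ (p_k'')²` of the quadratic interpolant `p_k` of the data
`v_{k-2}, v_{k-1}, v_k` at the nodes `x₀ + mΔx`, `m = k-2, k-1, k`, for `k ∈ {0,1,2}`. -/
theorem jiang_shu_smoothness_indicator_closed_form (Δx : ℝ) (hΔx : 0 < Δx) (x₀ : ℝ)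
    (v : ℤ → ℝ) :
    ∀ k : ℤ, k ∈ ({0, 1, 2} : Set ℤ) →
      (∃! p : Polynomial ℝ, p.degree ≤ 2 ∧
        ∀ m ∈ ({k - 2, k - 1, k} : Set ℤ), p.eval (x₀ + (m : ℝ) * Δx) = v m) ∧
      (∀ p : Polynomial ℝ, p.degree ≤ 2 →
        (∀ m ∈ ({k - 2, k - 1, k} : Set ℤ), p.eval (x₀ + (m : ℝ) * Δx) = v m) →
        Δx * (∫ x in (x₀ - Δx / 2)..(x₀ + Δx / 2), (p.derivative.eval x) ^ 2)
          + Δx ^ 3 * (∫ x in (x₀ - Δx / 2)..(x₀ + Δx / 2), (p.derivative.derivative.eval x) ^ 2)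
        = if k = 0 then
            (13 / 12) * (v (-2) - 2 * v (-1) + v 0) ^ 2
              + (1 / 4) * (v (-2) - 4 * v (-1) + 3 * v 0) ^ 2
          else if k = 1 then
            (13 / 12) * (v (-1) - 2 * v 0 + v 1) ^ 2 + (1 / 4) * (v 1 - v (-1)) ^ 2
          else
            (13 / 12) * (v 0 - 2 * v 1 + v 2) ^ 2
              + (1 / 4) * (3 * v 0 - 4 * v 1 + v 2) ^ 2) := by
  intro k hk
  refine ⟨exun Δx hΔx x₀ v k, ?_⟩
  intro p hp hv
  have key : ∀ m : ℤ, p.eval (x₀ + (m : ℝ) * Δx)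
      = p.coeff 0 + p.coeff 1 * (x₀ + (m : ℝ) * Δx) + p.coeff 2 * (x₀ + (m : ℝ) * Δx) ^ 2 := by
    intro m
    conv_lhs => rw [quad_repr p hp]
    simp
  rw [beta_val Δx x₀ p hp]
  simp only [Set.mem_insert_iff, Set.mem_singleton_iff] at hk
  rcases hk with rfl | rfl | rfl
  · rw [if_pos rfl]
    have e1 := (hv (-2) (by norm_num)).symm.trans (key (-2))
    have e2 := (hv (-1) (by norm_num)).symm.trans (key (-1))
    have e3 := (hv 0 (by norm_num)).symm.trans (key 0)
    rw [e1, e2, e3]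
    push_cast
    ring
  · rw [if_neg (by norm_num), if_pos rfl]
    have e1 := (hv (-1) (by norm_num)).symm.trans (key (-1))
    have e2 := (hv 0 (by norm_num)).symm.trans (key 0)
    have e3 := (hv 1 (by norm_num)).symm.trans (key 1)
    rw [e1, e2, e3]
    push_cast
    ring
  · rw [if_neg (by norm_num), if_neg (by norm_num)]
    have e1 := (hv 0 (by norm_num)).symm.trans (key 0)
    have e2 := (hv 1 (by norm_num)).symm.trans (key 1)
    have e3 := (hv 2 (by norm_num)).symm.trans (key 2)
    rw [e1, e2, e3]
    push_cast
    ring
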